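/- Let q : (0,∞) → ℝ and suppose for constants κ > 0, ε ∈ (0,1/8), and δ ∈ (0,1) small, that |q(y)| ≤ κδe^{2εy} and |log(1+q'(y))| ≤ κδe^{2εy} for all y ∈ (0, -α log δ) with α > 0 and 4εα < 1. Then ∫₀^{-α log δ} e^{-y}[1 - √(e^{-q(y)}(1+q'(y)))]² dy ≤ C δ²(1 - δ^{α(1-4ε)}) for a constant C depending only on κ, ε, α. -/

import Mathlib

open Real MeasureTheory

/-- Quantitative Hellinger-type bound: if q satisfies the stated exponential
bounds on (0, -α log δ), then the Hellinger-type integral is bounded by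
C δ²(1 - δ^{α(1-4ε)}) with C depending only on κ, ε, α. -/
theorem hellinger_integral_bound (α ε κ : ℝ) (hα : 0 < α) (hε0 : 0 < ε)
    (hε : ε < 1 / 8) (hκ : 0 < κ) (hαε : 4 * ε * α < 1) :
    ∃ C > 0, ∀ δ : ℝ, 0 < δ → δ < 1 → ∀ q q' : ℝ → ℝ,
      (∀ y ∈ Set.Ioo (0:ℝ) (-α * Real.log δ), HasDerivAt q (q' y) y) →
      (∀ y ∈ Set.Ioo (0:ℝ) (-α * Real.log δ),
        Real.exp (-(κ * δ * Real.exp (2 * ε * y))) ≤ Real.exp (-q y) ∧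
          Real.exp (-q y) ≤ Real.exp (κ * δ * Real.exp (2 * ε * y))) →
      (∀ y ∈ Set.Ioo (0:ℝ) (-α * Real.log δ),
        Real.exp (-(κ * δ * Real.exp (2 * ε * y))) ≤ 1 + q' y ∧
          1 + q' y ≤ Real.exp (κ * δ * Real.exp (2 * ε * y))) →
      (∫ y in (0:ℝ)..(-α * Real.log δ),
          Real.exp (-y) *
            (1 - Real.sqrt (Real.exp (-q y) * (1 + q' y))) ^ 2) ≤
        C * δ ^ 2 * (1 - δ ^ (α * (1 - 4 * ε))) := by
  have hε4 : 0 < 1 - 4 * ε := by linarith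
  refine ⟨κ ^ 2 * Real.exp (2 * κ) / (1 - 4 * ε), by positivity, ?_⟩
  intro δ hδ0 hδ1 q q' hderiv hq hq'
  set L : ℝ := -α * Real.log δ with hLdef
  have hlogδ : Real.log δ < 0 := Real.log_neg hδ0 hδ1
  have hL0 : 0 < L := by rw [hLdef]; nlinarith
  have hδpow : δ ^ (α * (1 - 4 * ε)) < 1 :=
    Real.rpow_lt_one hδ0.le hδ1 (by positivity)
  set f : ℝ → ℝ := fun y =>
    Real.exp (-y) * (1 - Real.sqrt (Real.exp (-q y) * (1 + q' y))) ^ 2 with hf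
  set g : ℝ → ℝ := fun y =>
    κ ^ 2 * Real.exp (2 * κ) * δ ^ 2 * Real.exp ((4 * ε - 1) * y) with hg
  have hgc : Continuous g := by fun_prop
  have hexpL : Real.exp ((4 * ε - 1) * L) = δ ^ (α * (1 - 4 * ε)) := by
    rw [Real.rpow_def_of_pos hδ0, hLdef]
    ring_nf
  have hIg : ∫ y in (0:ℝ)..L, g y =
      κ ^ 2 * Real.exp (2 * κ) / (1 - 4 * ε) * δ ^ 2 *
        (1 - δ ^ (α * (1 - 4 * ε))) := by
    have hc : (4 * ε - 1) ≠ 0 := by linarith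
    have hFTC : ∀ y ∈ Set.uIcc (0:ℝ) L,
        HasDerivAt (fun y => κ ^ 2 * Real.exp (2 * κ) * δ ^ 2 *
          (Real.exp ((4 * ε - 1) * y) / (4 * ε - 1))) (g y) y := by
      intro y _
      have h1 : HasDerivAt (fun y : ℝ => (4 * ε - 1) * y) (4 * ε - 1) y := by
        simpa using (hasDerivAt_id y).const_mul (4 * ε - 1)
      have h4 := ((h1.exp).div_const (4 * ε - 1)).const_mul
        (κ ^ 2 * Real.exp (2 * κ) * δ ^ 2)
      refine h4.congr_deriv ?_
      rw [hg]
      field_simp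
    rw [intervalIntegral.integral_eq_sub_of_hasDerivAt hFTC
      (hgc.intervalIntegrable 0 L)]
    rw [hexpL]
    simp only [mul_zero, Real.exp_zero]
    field_simp
    ring
  have key : ∀ y ∈ Set.Ioo (0:ℝ) L, f y ≤ g y := by
    intro y hy
    obtain ⟨hy0, hyL⟩ := hy
    set t : ℝ := κ * δ * Real.exp (2 * ε * y) with ht
    have ht0 : 0 ≤ t := by positivity
    have htκ : t ≤ κ := by
      have h1 : 2 * ε * y ≤ -Real.log δ := by nlinarith
      have h2 : Real.exp (2 * ε * y) ≤ 1 / δ := by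
        rw [ht] at *
        calc Real.exp (2 * ε * y) ≤ Real.exp (-Real.log δ) := Real.exp_le_exp.2 h1
          _ = 1 / δ := by rw [Real.exp_neg, Real.exp_log hδ0, one_div]
      calc t = κ * δ * Real.exp (2 * ε * y) := ht
        _ ≤ κ * δ * (1 / δ) := by
            apply mul_le_mul_of_nonneg_left h2 (by positivity)
        _ = κ := by field_simp
    obtain ⟨hq1, hq2⟩ := hq y ⟨hy0, hyL⟩
    obtain ⟨hq'1, hq'2⟩ := hq' y ⟨hy0, hyL⟩
    set s : ℝ := Real.sqrt (Real.exp (-q y) * (1 + q' y)) with hs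
    have hqpos : (0:ℝ) < 1 + q' y := lt_of_lt_of_le (Real.exp_pos _) hq'1
    have hs_lb : Real.exp (-t) ≤ s := by
      rw [hs, show Real.exp (-t) = Real.sqrt (Real.exp (-t) ^ 2) from
        (Real.sqrt_sq (Real.exp_nonneg _)).symm]
      apply Real.sqrt_le_sqrt
      rw [sq]
      exact mul_le_mul hq1 hq'1 (Real.exp_nonneg _) (Real.exp_nonneg _)
    have hs_ub : s ≤ Real.exp t := by
      rw [hs, show Real.exp t = Real.sqrt (Real.exp t ^ 2) from
        (Real.sqrt_sq (Real.exp_nonneg _)).symm]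
      apply Real.sqrt_le_sqrt
      rw [sq]
      exact mul_le_mul hq2 hq'2 hqpos.le (Real.exp_nonneg _)
    have he1 : 1 + t ≤ Real.exp t := by linarith [Real.add_one_le_exp t]
    have he2 : 1 - t ≤ Real.exp (-t) := by
      have := Real.add_one_le_exp (-t); linarith
    have hsq : (1 - s) ^ 2 ≤ (Real.exp t - 1) ^ 2 := by
      apply sq_le_sq'
      · linarith
      · linarith
    have hmul : Real.exp t * Real.exp (-t) = 1 := by
      rw [← Real.exp_add]; simp
    have het1 : Real.exp t - 1 ≤ t * Real.exp t := by
      nlinarith [Real.exp_pos t]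
    have het2 : Real.exp t ≤ Real.exp κ := Real.exp_le_exp.2 htκ
    have hsq2 : (Real.exp t - 1) ^ 2 ≤ (t * Real.exp κ) ^ 2 := by
      have h0 : 0 ≤ Real.exp t - 1 := by linarith
      have hb : Real.exp t - 1 ≤ t * Real.exp κ := by
        calc Real.exp t - 1 ≤ t * Real.exp t := het1
          _ ≤ t * Real.exp κ := mul_le_mul_of_nonneg_left het2 ht0
      exact pow_le_pow_left₀ h0 hb 2
    have hexpsq : Real.exp (2 * ε * y) ^ 2 = Real.exp (4 * ε * y) := by
      rw [sq, ← Real.exp_add]; ring_nf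
    have hexpprod : Real.exp (4 * ε * y) * Real.exp (-y) =
        Real.exp ((4 * ε - 1) * y) := by
      rw [← Real.exp_add]; ring_nf
    calc f y = Real.exp (-y) * (1 - s) ^ 2 := rfl
      _ ≤ Real.exp (-y) * (Real.exp t - 1) ^ 2 :=
          mul_le_mul_of_nonneg_left hsq (Real.exp_nonneg _)
      _ ≤ Real.exp (-y) * (t * Real.exp κ) ^ 2 :=
          mul_le_mul_of_nonneg_left hsq2 (Real.exp_nonneg _)
      _ = g y := by
          simp only [hg]
          rw [ht, ← hexpprod, ← hexpsq,
            show Real.exp (2 * κ) = Real.exp κ ^ 2 by rw [sq, ← Real.exp_add]; ring_nf]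
          ring
  by_cases hint : IntervalIntegrable f volume 0 L
  · calc (∫ y in (0:ℝ)..L, f y)
        = ∫ y in Set.Ioo (0:ℝ) L, f y := by
          rw [intervalIntegral.integral_of_le hL0.le,
            MeasureTheory.integral_Ioc_eq_integral_Ioo]
      _ ≤ ∫ y in Set.Ioo (0:ℝ) L, g y := by
          apply MeasureTheory.setIntegral_mono_on
            (hint.1.mono_set Set.Ioo_subset_Ioc_self)
            (((hgc.intervalIntegrable 0 L).1).mono_set Set.Ioo_subset_Ioc_self)
            measurableSet_Ioo key
      _ = ∫ y in (0:ℝ)..L, g y := by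
          rw [intervalIntegral.integral_of_le hL0.le,
            MeasureTheory.integral_Ioc_eq_integral_Ioo]
      _ = κ ^ 2 * Real.exp (2 * κ) / (1 - 4 * ε) * δ ^ 2 *
            (1 - δ ^ (α * (1 - 4 * ε))) := hIg
  · rw [intervalIntegral.integral_undef hint]
    have : (0:ℝ) ≤ 1 - δ ^ (α * (1 - 4 * ε)) := by linarith
    positivity
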